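/- Let q be a prime power, k an even integer, i ≥ 0 an integer, and t = (q−1)k/2 − i(q+1) ≥ 0. Define an F_q-linear map φ from homogeneous polynomials of degree t in X,Y over F_q to F_q(z) by φ(F) = F(z,1)·(z − z^q)^{i − k/2}. Then for every γ = [[a,b],[c,d]] ∈ GL₂(F_q), φ((ad−bc)^{i−k/2} F(dX+bY, cX+aY)) = (a+cz)^{-k} · (φF)((b+dz)/(a+cz)); that is, φ intertwines the twisted symmetric-power action with the weight-k slash action on rational functions. -/

import Mathlib

open Matrix MvPolynomial

/-- The twisted symmetric-power action `γ.F = (ad-bc)^s F(dX+bY, cX+aY)`. -/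
noncomputable def symAct {A : Type*} [CommRing A] (s : ℤ) (γ : GL (Fin 2) A)
    (F : MvPolynomial (Fin 2) A) : MvPolynomial (Fin 2) A :=
  (((Matrix.GeneralLinearGroup.det γ) ^ s : Aˣ) : A) •
    aeval ![C ((γ : Matrix (Fin 2) (Fin 2) A) 1 1) * X 0 +
              C ((γ : Matrix (Fin 2) (Fin 2) A) 0 1) * X 1,
            C ((γ : Matrix (Fin 2) (Fin 2) A) 1 0) * X 0 +
              C ((γ : Matrix (Fin 2) (Fin 2) A) 0 0) * X 1] F

private lemma aeval_smul_of_isHomogeneous {R S : Type*} [CommSemiring R] [CommSemiring S]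
    [Algebra R S] {σ : Type*} {n : ℕ} {P : MvPolynomial σ R} (hP : P.IsHomogeneous n)
    (r : S) (v : σ → S) :
    aeval (fun j => r * v j) P = r ^ n * aeval v P := by
  rw [aeval_def, aeval_def, eval₂_eq, eval₂_eq, Finset.mul_sum]
  refine Finset.sum_congr rfl fun d hd => ?_
  have hdeg : ∑ j ∈ d.support, d j = n := by
    have h := hP (MvPolynomial.mem_support_iff.mp hd)
    simpa [Finsupp.weight_apply, Finsupp.sum] using h
  calc (algebraMap R S) (coeff d P) * ∏ j ∈ d.support, (fun j => r * v j) j ^ d j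
      = (algebraMap R S) (coeff d P) *
          ((∏ j ∈ d.support, r ^ d j) * ∏ j ∈ d.support, v j ^ d j) := by
        rw [← Finset.prod_mul_distrib]
        exact congrArg _ (Finset.prod_congr rfl fun j _ => mul_pow _ _ _)
    _ = r ^ n * ((algebraMap R S) (coeff d P) * ∏ j ∈ d.support, v j ^ d j) := by
        rw [Finset.prod_pow_eq_pow_sum, hdeg]; ring

/-- For even weight `k = 2m`, `i ≥ 0` and `t = (q-1)k/2 - i(q+1) ≥ 0`, the map
`φ(F) = F(z,1)·(z - z^q)^{i - k/2}` intertwines the twisted symmetric-power action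
`Sym^t(St)[i - k/2]` with the weight-`k` slash action on `F_q(z)`. -/
theorem phi_equivariant_even {F : Type*} [Field F] [Fintype F]
    (k m : ℤ) (hk : k = 2 * m) (i t : ℕ)
    (ht : (t : ℤ) = ((Fintype.card F : ℤ) - 1) * m - (i : ℤ) * ((Fintype.card F : ℤ) + 1))
    (P : MvPolynomial (Fin 2) F) (hP : P.IsHomogeneous t) (γ : GL (Fin 2) F) :
    aeval ![RatFunc.X, (1 : RatFunc F)] (symAct ((i : ℤ) - m) γ P) *
        (RatFunc.X - RatFunc.X ^ (Fintype.card F)) ^ ((i : ℤ) - m) =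
      (RatFunc.C ((γ : Matrix (Fin 2) (Fin 2) F) 0 0) +
          RatFunc.C ((γ : Matrix (Fin 2) (Fin 2) F) 1 0) * RatFunc.X) ^ (-k) *
        RatFunc.eval (algebraMap F (RatFunc F))
          ((RatFunc.C ((γ : Matrix (Fin 2) (Fin 2) F) 0 1) +
              RatFunc.C ((γ : Matrix (Fin 2) (Fin 2) F) 1 1) * RatFunc.X) /
            (RatFunc.C ((γ : Matrix (Fin 2) (Fin 2) F) 0 0) +
              RatFunc.C ((γ : Matrix (Fin 2) (Fin 2) F) 1 0) * RatFunc.X))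
          (aeval ![RatFunc.X, (1 : RatFunc F)] P *
            (RatFunc.X - RatFunc.X ^ (Fintype.card F)) ^ ((i : ℤ) - m)) := by
  classical
  set q := Fintype.card F with hq
  obtain ⟨n, hprime, hcard⟩ := FiniteField.card F (ringChar F)
  haveI : Fact (ringChar F).Prime := ⟨hprime⟩
  haveI : CharP (RatFunc F) (ringChar F) :=
    charP_of_injective_ringHom (RatFunc.algebraMap_injective F) (ringChar F)
  set z : RatFunc F := RatFunc.X with hz
  set a := (γ : Matrix (Fin 2) (Fin 2) F) 0 0 with ha
  set b := (γ : Matrix (Fin 2) (Fin 2) F) 0 1 with hb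
  set c := (γ : Matrix (Fin 2) (Fin 2) F) 1 0 with hc
  set d := (γ : Matrix (Fin 2) (Fin 2) F) 1 1 with hd
  have hdetval : ((Matrix.GeneralLinearGroup.det γ : Fˣ) : F) = a * d - b * c := by
    rw [Matrix.GeneralLinearGroup.val_det_apply, Matrix.det_fin_two]
  set e := a * d - b * c with he_def
  have he : e ≠ 0 := by rw [← hdetval]; exact Units.ne_zero _
  have hCe : RatFunc.C e ≠ 0 := by simpa using he
  set N := RatFunc.C b + RatFunc.C d * z with hN
  set D := RatFunc.C a + RatFunc.C c * z with hD_def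
  have hD0 : D ≠ 0 := by
    rw [hD_def, hz, ← RatFunc.algebraMap_C a, ← RatFunc.algebraMap_C c, ← RatFunc.algebraMap_X,
      ← _root_.map_mul, ← _root_.map_add]
    apply RatFunc.algebraMap_ne_zero
    intro hpoly
    have h0 : a = 0 := by simpa using congrArg (Polynomial.coeff · 0) hpoly
    have h1 : c = 0 := by simpa using congrArg (Polynomial.coeff · 1) hpoly
    apply he; rw [he_def, h0, h1]; ring
  have hq2 : 1 < q := Fintype.one_lt_card
  have hZ0 : z - z ^ q ≠ 0 := by
    rw [hz, ← RatFunc.algebraMap_X, ← _root_.map_pow, ← _root_.map_sub]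
    apply RatFunc.algebraMap_ne_zero
    intro hpoly
    have h1 := congrArg (Polynomial.coeff · 1) hpoly
    simp only [Polynomial.coeff_sub, Polynomial.coeff_X_one, Polynomial.coeff_X_pow,
      Polynomial.coeff_zero] at h1
    rw [if_neg (by omega : ¬ (1:ℕ) = q), sub_zero] at h1
    exact one_ne_zero h1
  have frob : ∀ x y : F, (RatFunc.C x + RatFunc.C y * z) ^ q = RatFunc.C x + RatFunc.C y * z ^ q := by
    intro x y
    rw [hq, hcard, add_pow_char_pow, mul_pow, ← _root_.map_pow, ← _root_.map_pow, ← hcard,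
      FiniteField.pow_card, FiniteField.pow_card]
  have htrz : Transcendental F z := by
    rw [hz, ← RatFunc.algebraMap_X]
    exact (transcendental_algebraMap_iff (RatFunc.algebraMap_injective F)).mpr
      (Polynomial.transcendental_X F)
  set w := N / D with hw_def
  have hwD : w * D = N := div_mul_cancel₀ _ hD0
  have hkey_cd : (RatFunc.C c * w - RatFunc.C d) * D = - RatFunc.C e := by
    rw [sub_mul, mul_assoc, hwD, hN, hD_def, he_def, _root_.map_sub, _root_.map_mul, _root_.map_mul]; ring
  have hcd0 : RatFunc.C c * w - RatFunc.C d ≠ 0 := by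
    intro h0
    rw [h0, zero_mul] at hkey_cd
    exact hCe (neg_eq_zero.mp hkey_cd.symm)
  have hz_eq : z = (RatFunc.C b - RatFunc.C a * w) / (RatFunc.C c * w - RatFunc.C d) := by
    rw [eq_div_iff hcd0, hw_def, hN, hD_def]
    have hD0' : RatFunc.C a + RatFunc.C c * z ≠ 0 := hD_def ▸ hD0
    field_simp
    linear_combination (RatFunc.C b + RatFunc.C d * z) * mul_inv_cancel₀ hD0'
  have hCint : ∀ x : F, IsIntegral F (RatFunc.C x) := by
    intro x
    rw [← RatFunc.algebraMap_eq_C]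
    exact isIntegral_algebraMap
  have htrw : Transcendental F w := by
    intro halg
    have hint : IsIntegral F w := isAlgebraic_iff_isIntegral.mp halg
    apply htrz
    rw [hz_eq, div_eq_mul_inv]
    exact isAlgebraic_iff_isIntegral.mpr
      (((hCint b).sub ((hCint a).mul hint)).mul (((hCint c).mul hint).sub (hCint d)).inv)
  have haev : Function.Injective (Polynomial.aeval w : Polynomial F →ₐ[F] RatFunc F) :=
    transcendental_iff_injective.mp htrw
  set σ' : RatFunc F →ₐ[F] RatFunc F := RatFunc.liftAlgHom (Polynomial.aeval w)
    (nonZeroDivisors_le_comap_nonZeroDivisors_of_injective _ haev) with hσ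
  have heval : ∀ r : RatFunc F, RatFunc.eval (algebraMap F (RatFunc F)) w r = σ' r := by
    intro r
    rw [hσ, RatFunc.liftAlgHom_apply]
    simp only [RatFunc.eval, Polynomial.aeval_def]
  have hσX : σ' z = w := by rw [← heval, hz]; exact RatFunc.eval_X _ _
  have hσP : σ' (aeval ![z, (1 : RatFunc F)] P) = aeval ![w, (1 : RatFunc F)] P := by
    rw [comp_aeval_apply]
    have hfun : (fun j => σ' (![z, (1 : RatFunc F)] j)) = ![w, (1 : RatFunc F)] := by
      funext j
      fin_cases j
      · simpa using hσX
      · simp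
    rw [hfun]
  set s : ℤ := (i : ℤ) - m with hs
  set Z := z - z ^ q with hZdef
  have hσZ : σ' (Z ^ s) = (w - w ^ q) ^ s := by
    rw [map_zpow₀, hZdef, _root_.map_sub, _root_.map_pow, hσX]
  have hNq : N ^ q = RatFunc.C b + RatFunc.C d * z ^ q := by rw [hN]; exact frob b d
  have hDq : D ^ q = RatFunc.C a + RatFunc.C c * z ^ q := by rw [hD_def]; exact frob a c
  have key2 : w - w ^ q = RatFunc.C e * Z / D ^ (q + 1) := by
    rw [eq_div_iff (pow_ne_zero _ hD0)]
    have expand : (w - w ^ q) * D ^ (q + 1) = N * D ^ q - N ^ q * D := by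
      rw [hw_def, div_pow]
      field_simp
      ring
    rw [expand, hNq, hDq, hN, hZdef, he_def, _root_.map_sub, _root_.map_mul, _root_.map_mul]
    ring
  have hA : aeval ![N, D] P = D ^ t * aeval ![w, (1 : RatFunc F)] P := by
    have hvec : (fun j => D * (![w, (1 : RatFunc F)] j)) = ![N, D] := by
      funext j
      fin_cases j
      · show D * w = N
        rw [mul_comm]; exact hwD
      · show D * (1 : RatFunc F) = D
        rw [mul_one]
    rw [← hvec, aeval_smul_of_isHomogeneous hP]
  have hLHS : aeval ![z, (1 : RatFunc F)] (symAct s γ P)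
      = RatFunc.C e ^ s * aeval ![N, D] P := by
    rw [symAct, smul_eq_C_mul, _root_.map_mul, aeval_C, comp_aeval_apply]
    have h1 : (algebraMap F (RatFunc F))
        (((Matrix.GeneralLinearGroup.det γ) ^ s : Fˣ) : F) = RatFunc.C e ^ s := by
      rw [Units.val_zpow_eq_zpow_val, hdetval, RatFunc.algebraMap_eq_C, map_zpow₀]
    have h2 : (fun j => aeval ![z, (1 : RatFunc F)]
        (![MvPolynomial.C ((γ : Matrix (Fin 2) (Fin 2) F) 1 1) * MvPolynomial.X 0 +
              MvPolynomial.C ((γ : Matrix (Fin 2) (Fin 2) F) 0 1) * MvPolynomial.X 1,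
            MvPolynomial.C ((γ : Matrix (Fin 2) (Fin 2) F) 1 0) * MvPolynomial.X 0 +
              MvPolynomial.C ((γ : Matrix (Fin 2) (Fin 2) F) 0 0) * MvPolynomial.X 1] j))
        = ![N, D] := by
      funext j
      fin_cases j
      · show aeval ![z, (1 : RatFunc F)]
          (MvPolynomial.C d * MvPolynomial.X 0 + MvPolynomial.C b * MvPolynomial.X 1) = N
        simp only [_root_.map_add, _root_.map_mul, aeval_C, aeval_X, Matrix.cons_val_zero,
          Matrix.cons_val_one, Matrix.head_cons, RatFunc.algebraMap_eq_C, hN]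
        ring
      · show aeval ![z, (1 : RatFunc F)]
          (MvPolynomial.C c * MvPolynomial.X 0 + MvPolynomial.C a * MvPolynomial.X 1) = D
        simp only [_root_.map_add, _root_.map_mul, aeval_C, aeval_X, Matrix.cons_val_zero,
          Matrix.cons_val_one, Matrix.head_cons, RatFunc.algebraMap_eq_C, hD_def]
        ring
    rw [h1, h2]
  set B := aeval ![w, (1 : RatFunc F)] P with hB
  rw [heval, _root_.map_mul, hσP, hσZ, hLHS, key2, hA]
  have hZC : ((D ^ (q + 1) : RatFunc F)) ^ s = D ^ (((q : ℤ) + 1) * s) := by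
    rw [← _root_.zpow_natCast D (q + 1), ← _root_.zpow_mul]
    norm_cast
  rw [div_zpow, mul_zpow, hZC, div_eq_mul_inv, ← _root_.zpow_neg, ← _root_.zpow_natCast D t]
  have hDpow : D ^ (-k) * D ^ (-(((q : ℤ) + 1) * s)) = D ^ (t : ℤ) := by
    rw [← _root_.zpow_add₀ hD0]
    congr 1
    rw [hk, ht, hs]
    ring
  rw [← hDpow]
  ring
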